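/- In the Artin group A[F₄] with standard generators s₁,s₂,s₃,s₄, the element α = s₁s₂⁻¹ satisfies the identity α·(βαβ⁻¹)·(β²αβ⁻²) = 1, where β = s₁s₂; in particular α is a generalized torsion element of the subgroup normally generated by elements mapping to the identity under any homomorphism killing α and β. -/

import Mathlib

namespace Stmt1

open FreeGroup

/-- Defining relators of the Artin group of type `F₄`, with generators
`s₁ = of 0`, `s₂ = of 1`, `s₃ = of 2`, `s₄ = of 3`. -/
def F4Rels : Set (FreeGroup (Fin 4)) :=
  { of 0 * of 1 * of 0 * (of 1 * of 0 * of 1)⁻¹,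
    of 1 * of 2 * of 1 * of 2 * (of 2 * of 1 * of 2 * of 1)⁻¹,
    of 2 * of 3 * of 2 * (of 3 * of 2 * of 3)⁻¹,
    of 0 * of 2 * (of 2 * of 0)⁻¹,
    of 0 * of 3 * (of 3 * of 0)⁻¹,
    of 1 * of 3 * (of 3 * of 1)⁻¹ }

/-- The Artin group of type `F₄`. -/
def ArtinF4 : Type := PresentedGroup F4Rels

instance : Group ArtinF4 := by unfold ArtinF4; infer_instance

/-- The standard generators of `A[F₄]`. -/
def s (i : Fin 4) : ArtinF4 := PresentedGroup.of i

theorem braid_cube {G : Type*} [Group G] (a b : G) (h : a * b * a = b * a * b) :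
    (a * b⁻¹) * ((a * b) * (a * b⁻¹) * (a * b)⁻¹) *
      ((a * b) ^ 2 * (a * b⁻¹) * ((a * b) ^ 2)⁻¹) = 1 := by
  have h1 : a * (a * b * a) = (a * b * a) * b := by
    calc a * (a * b * a) = a * (b * a * b) := by rw [h]
    _ = (a * b * a) * b := by group
  have h2 : b * (a * b * a) = (a * b * a) * a := by
    calc b * (a * b * a) = (b * a * b) * a := by group
    _ = (a * b * a) * a := by rw [h]
  have hcomm : a * ((a * b * a) * (a * b * a)) = ((a * b * a) * (a * b * a)) * a := by
    calc a * ((a * b * a) * (a * b * a)) = (a * (a * b * a)) * (a * b * a) := by group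
    _ = ((a * b * a) * b) * (a * b * a) := by rw [h1]
    _ = (a * b * a) * (b * (a * b * a)) := by group
    _ = (a * b * a) * ((a * b * a) * a) := by rw [h2]
    _ = ((a * b * a) * (a * b * a)) * a := by group
  have hD : (a * b * a) * (a * b * a) = a * b * (a * b * (a * b)) := by
    calc (a * b * a) * (a * b * a) = a * b * (a * (a * b * a)) := by group
    _ = a * b * ((a * b * a) * b) := by rw [h1]
    _ = a * b * (a * b * (a * b)) := by group
  have hc : a * b⁻¹ * (a * b) = a * (a * b * a⁻¹) := by
    calc a * b⁻¹ * (a * b) = a * b⁻¹ * ((a * b * a) * a⁻¹) := by group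
    _ = a * b⁻¹ * ((b * a * b) * a⁻¹) := by rw [h]
    _ = a * (a * b * a⁻¹) := by group
  have key : (a * b⁻¹ * (a * b)) * (a * b⁻¹ * (a * b)) * (a * b⁻¹ * (a * b))
      = a * b * (a * b * (a * b)) := by
    rw [hc]
    calc (a * (a * b * a⁻¹)) * (a * (a * b * a⁻¹)) * (a * (a * b * a⁻¹))
        = a * ((a * b * a) * (b * a * b)) * a⁻¹ := by group
    _ = a * ((a * b * a) * (a * b * a)) * a⁻¹ := by rw [← h]
    _ = (a * ((a * b * a) * (a * b * a))) * a⁻¹ := by group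
    _ = (((a * b * a) * (a * b * a)) * a) * a⁻¹ := by rw [hcomm]
    _ = (a * b * a) * (a * b * a) := by group
    _ = a * b * (a * b * (a * b)) := hD
  rw [pow_two]
  calc (a * b⁻¹) * ((a * b) * (a * b⁻¹) * (a * b)⁻¹) *
      ((a * b) * (a * b) * (a * b⁻¹) * ((a * b) * (a * b))⁻¹)
      = (a * b⁻¹ * (a * b)) * (a * b⁻¹ * (a * b)) * (a * b⁻¹ * (a * b)) *
        (a * b * (a * b * (a * b)))⁻¹ := by group
  _ = 1 := by rw [key]; group

theorem braid_rel : s 0 * s 1 * s 0 = s 1 * s 0 * s 1 := by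
  have hmem : (of 0 * of 1 * of 0 * (of 1 * of 0 * of 1)⁻¹ : FreeGroup (Fin 4)) ∈
      Subgroup.normalClosure F4Rels :=
    Subgroup.subset_normalClosure (Set.mem_insert _ _)
  have h1 : (PresentedGroup.mk F4Rels) (of 0 * of 1 * of 0 * (of 1 * of 0 * of 1)⁻¹)
      = (1 : PresentedGroup F4Rels) := (QuotientGroup.eq_one_iff _).mpr hmem
  have h2 : s 0 * s 1 * s 0 * (s 1 * s 0 * s 1)⁻¹ = 1 := by
    exact h1
  exact mul_inv_eq_one.mp h2

/-- In `A[F₄]`, with `α = s₁s₂⁻¹` and `β = s₁s₂`, we have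
`α·(βαβ⁻¹)·(β²αβ⁻²) = 1`; in particular, in any normal subgroup `N`
containing `α` and `β` (e.g. the kernel of any homomorphism killing `α` and
`β`), the element `α` is a generalized torsion element of `N`. -/
theorem generalized_torsion_in_F4 :
    (s 0 * (s 1)⁻¹) * ((s 0 * s 1) * (s 0 * (s 1)⁻¹) * (s 0 * s 1)⁻¹) *
      ((s 0 * s 1) ^ 2 * (s 0 * (s 1)⁻¹) * ((s 0 * s 1) ^ 2)⁻¹) = 1 ∧
    ∀ (N : Subgroup ArtinF4), N.Normal → (s 0 * (s 1)⁻¹) ∈ N → (s 0 * s 1) ∈ N →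
      ∃ (m : ℕ), 0 < m ∧ ∃ γ : Fin m → N,
        (List.ofFn (fun i => (γ i : ArtinF4) * (s 0 * (s 1)⁻¹) * ((γ i : ArtinF4))⁻¹)).prod
          = 1 := by
  have main := braid_cube (s 0) (s 1) braid_rel
  refine ⟨main, fun N _ hα hβ => ?_⟩
  refine ⟨3, by norm_num, ![⟨1, one_mem N⟩, ⟨s 0 * s 1, hβ⟩, ⟨(s 0 * s 1) ^ 2, pow_mem hβ 2⟩], ?_⟩
  simp only [List.ofFn_succ, List.ofFn_zero, List.prod_cons, List.prod_nil,
    Matrix.cons_val_zero, Matrix.cons_val_one, Matrix.head_cons]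
  simpa [one_mul, inv_one, mul_one, mul_assoc] using main

end Stmt1
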